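/- Let A be a finite-dimensional commutative ℝ-algebra, h ∈ A, and let b be a basis of A as an ℝ-vector space. Let M be the Gram matrix with respect to b of the bilinear form H_h(f,g) = trace of the multiplication map L_{fhg}. Then M is a symmetric real matrix, and its signature, i.e. (number of positive eigenvalues of M, with multiplicity) − (number of negative eigenvalues of M, with multiplicity), equals #{φ : ℝ-algebra homomorphisms A → ℝ with φ(h) > 0} − #{φ : ℝ-algebra homomorphisms A → ℝ with φ(h) < 0}. In particular, for h = 1 the signature of the trace form of A over ℝ equals the number of ℝ-algebra homomorphisms A → ℝ. -/

import Mathlib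

open Module Finset
set_option linter.unusedSectionVars false
set_option linter.unusedVariables false
set_option maxHeartbeats 2000000
set_option synthInstance.maxHeartbeats 1000000

attribute [local instance] IsArtinianRing.fieldOfSubtypeIsMaximal

namespace HermiteAux

variable {V : Type*} [AddCommGroup V] [Module ℝ V] [FiniteDimensional ℝ V]


variable {V : Type*} [AddCommGroup V] [Module ℝ V] [FiniteDimensional ℝ V]

lemma bilin_apply_sum {ι κ : Type*} [Fintype ι] [Fintype κ] (B : V →ₗ[ℝ] V →ₗ[ℝ] ℝ)
    (c : ι → ℝ) (d : κ → ℝ) (m : ι → V) (m' : κ → V) :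
    B (∑ i, c i • m i) (∑ j, d j • m' j) = ∑ i, ∑ j, c i * d j * B (m i) (m' j) := by
  simp only [map_sum, map_smul, LinearMap.sum_apply, LinearMap.smul_apply, smul_eq_mul,
    Finset.mul_sum]
  rw [Finset.sum_comm]
  exact sum_congr rfl fun i _ => sum_congr rfl fun j _ => by ring

lemma bilin_self_of_orthog {ι : Type*} [Fintype ι] [DecidableEq ι] (B : V →ₗ[ℝ] V →ₗ[ℝ] ℝ)
    (m : ι → V) (horth : ∀ i j, i ≠ j → B (m i) (m j) = 0) (c : ι → ℝ) :
    B (∑ i, c i • m i) (∑ i, c i • m i) = ∑ i, c i ^ 2 * B (m i) (m i) := by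
  rw [bilin_apply_sum]
  refine Finset.sum_congr rfl fun i _ => ?_
  rw [Finset.sum_eq_single i]
  · ring
  · intro j _ hj; rw [horth i j (Ne.symm hj)]; ring
  · intro hi; exact absurd (Finset.mem_univ i) hi

lemma card_pos_le_of_orthobases {ι κ : Type*} [Fintype ι] [Fintype κ]
    (B : V →ₗ[ℝ] V →ₗ[ℝ] ℝ) (v : Basis ι ℝ V) (w : Basis κ ℝ V)
    (hv : ∀ i j, i ≠ j → B (v i) (v j) = 0) (hw : ∀ i j, i ≠ j → B (w i) (w j) = 0) :
    (univ.filter fun i => 0 < B (v i) (v i)).card ≤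
      (univ.filter fun j => 0 < B (w j) (w j)).card := by
  classical
  set P := Submodule.span ℝ (Set.range fun i : {i // 0 < B (v i) (v i)} => v i) with hP
  set N := Submodule.span ℝ (Set.range fun j : {j // ¬ 0 < B (w j) (w j)} => w j) with hN
  have hdisj : Disjoint P N := by
    rw [Submodule.disjoint_def]
    intro x hxP hxN
    obtain ⟨c, hc⟩ := (Submodule.mem_span_range_iff_exists_fun ℝ).mp hxP
    obtain ⟨d, hd⟩ := (Submodule.mem_span_range_iff_exists_fun ℝ).mp hxN
    have hvv : ∀ (i j : {i // 0 < B (v i) (v i)}), i ≠ j → B (v i) (v j) = 0 :=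
      fun i j hij => hv i j (fun hh => hij (Subtype.ext hh))
    have hww : ∀ (i j : {j // ¬ 0 < B (w j) (w j)}), i ≠ j → B (w i) (w j) = 0 :=
      fun i j hij => hw i j (fun hh => hij (Subtype.ext hh))
    have e1 : B x x = ∑ i, c i ^ 2 * B (v i) (v i) := by
      rw [← hc]; exact bilin_self_of_orthog B _ hvv c
    have e2 : B x x = ∑ j, d j ^ 2 * B (w j) (w j) := by
      rw [← hd]; exact bilin_self_of_orthog B _ hww d
    have hge : 0 ≤ B x x := by
      rw [e1]; exact Finset.sum_nonneg fun i _ => mul_nonneg (sq_nonneg _) i.2.le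
    have hle : B x x ≤ 0 := by
      rw [e2]
      exact Finset.sum_nonpos fun j _ =>
        mul_nonpos_of_nonneg_of_nonpos (sq_nonneg _) (le_of_not_gt j.2)
    have h0 : B x x = 0 := le_antisymm hle hge
    have hceq : ∀ i, c i = 0 := by
      intro i
      have := (Finset.sum_eq_zero_iff_of_nonneg
        (fun i _ => mul_nonneg (sq_nonneg _) (i.2.le))).mp (e1 ▸ h0) i (Finset.mem_univ i)
      have hci : c i ^ 2 = 0 := by
        by_contra hne
        exact hne (by
          rcases mul_eq_zero.mp this with hh | hh
          · exact hh
          · exact absurd hh (ne_of_gt i.2))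
      exact pow_eq_zero_iff two_ne_zero |>.mp hci
    rw [← hc]
    exact Finset.sum_eq_zero fun i _ => by rw [hceq i, zero_smul]
  -- dimension count
  have hliP : LinearIndependent ℝ (fun i : {i // 0 < B (v i) (v i)} => v i) :=
    v.linearIndependent.comp _ Subtype.coe_injective
  have hliN : LinearIndependent ℝ (fun j : {j // ¬ 0 < B (w j) (w j)} => w j) :=
    w.linearIndependent.comp _ Subtype.coe_injective
  have hfP : finrank ℝ P = (univ.filter fun i => 0 < B (v i) (v i)).card := by
    rw [hP, finrank_span_eq_card hliP, Fintype.card_subtype]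
  have hfN : finrank ℝ N = (univ.filter fun j => ¬ 0 < B (w j) (w j)).card := by
    rw [hN, finrank_span_eq_card hliN, Fintype.card_subtype]
  have hsum : finrank ℝ P + finrank ℝ N ≤ finrank ℝ V := by
    have := Submodule.finrank_sup_add_finrank_inf_eq P N
    rw [hdisj.eq_bot] at this
    simp only [finrank_bot, add_zero] at this
    rw [← this]
    exact Submodule.finrank_le _
  have hV : finrank ℝ V = Fintype.card κ := finrank_eq_card_basis w
  have hcompl := Finset.card_filter_add_card_filter_not (s := (univ : Finset κ))
      (p := fun j => 0 < B (w j) (w j))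
  simp only [Finset.card_univ] at hcompl
  have hle2 : (univ.filter fun j => 0 < B (w j) (w j)).card ≤ Fintype.card κ :=
    le_trans (Finset.card_le_card (Finset.filter_subset _ _)) (by simp)
  omega
lemma card_pos_eq_of_orthobases {ι κ : Type*} [Fintype ι] [Fintype κ]
    (B : V →ₗ[ℝ] V →ₗ[ℝ] ℝ) (v : Basis ι ℝ V) (w : Basis κ ℝ V)
    (hv : ∀ i j, i ≠ j → B (v i) (v j) = 0) (hw : ∀ i j, i ≠ j → B (w i) (w j) = 0) :
    (univ.filter fun i => 0 < B (v i) (v i)).card =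
      (univ.filter fun j => 0 < B (w j) (w j)).card :=
  le_antisymm (card_pos_le_of_orthobases B v w hv hw) (card_pos_le_of_orthobases B w v hw hv)

lemma card_neg_eq_of_orthobases {ι κ : Type*} [Fintype ι] [Fintype κ]
    (B : V →ₗ[ℝ] V →ₗ[ℝ] ℝ) (v : Basis ι ℝ V) (w : Basis κ ℝ V)
    (hv : ∀ i j, i ≠ j → B (v i) (v j) = 0) (hw : ∀ i j, i ≠ j → B (w i) (w j) = 0) :
    (univ.filter fun i => B (v i) (v i) < 0).card =
      (univ.filter fun j => B (w j) (w j) < 0).card := by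
  have := card_pos_eq_of_orthobases (-B) v w
    (fun i j hij => by simp [hv i j hij]) (fun i j hij => by simp [hw i j hij])
  simpa [neg_pos] using this


/-- Per-factor analysis: `K` a finite-dimensional real field factor. -/
lemma factor_lemma (K : Type*) [Field K] [Algebra ℝ K] [FiniteDimensional ℝ K]
    (t : K →ₗ[ℝ] ℝ) (ht : 0 < t 1) (c : K) :
    ∃ (n : ℕ) (v : Basis (Fin n) ℝ K),
      (∀ k l, k ≠ l → t (v k * c * v l) = 0) ∧
      Finite (K →ₐ[ℝ] ℝ) ∧
      ((∑ k, ((if 0 < t (v k * c * v k) then (1:ℤ) else 0)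
          - (if t (v k * c * v k) < 0 then (1:ℤ) else 0)))
        = (Nat.card {ψ : K →ₐ[ℝ] ℝ // 0 < ψ c} : ℤ)
          - (Nat.card {ψ : K →ₐ[ℝ] ℝ // ψ c < 0} : ℤ)) := by
  classical
  rcases le_or_gt (finrank ℝ K) 1 with hr | hr
  · -- finrank = 1 case
    have h1 : finrank ℝ K = 1 :=
      le_antisymm hr (Module.finrank_pos)
    -- algebraMap ℝ K is bijective
    have hbot : (⊥ : Subalgebra ℝ K) = ⊤ := Subalgebra.bot_eq_top_of_finrank_eq_one h1
    have hsurj : Function.Surjective (algebraMap ℝ K) := by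
      intro x
      have : x ∈ (⊥ : Subalgebra ℝ K) := hbot ▸ Algebra.mem_top
      exact Algebra.mem_bot.mp this
    have hinj : Function.Injective (algebraMap ℝ K) := (algebraMap ℝ K).injective
    let θ : ℝ ≃ₐ[ℝ] K := AlgEquiv.ofBijective (Algebra.ofId ℝ K) ⟨hinj, hsurj⟩
    -- every AlgHom K →ₐ[ℝ] ℝ equals θ.symm
    have huniq : ∀ ψ : K →ₐ[ℝ] ℝ, ψ = θ.symm := by
      intro ψ
      ext x
      obtain ⟨r, rfl⟩ := hsurj x
      have h1 : ψ (algebraMap ℝ K r) = r := ψ.commutes r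
      have h2 : θ.symm (algebraMap ℝ K r) = r := by
        have : θ r = algebraMap ℝ K r := rfl
        rw [← this, AlgEquiv.symm_apply_apply]
      rw [h1]; exact h2.symm
    haveI : Finite (K →ₐ[ℝ] ℝ) := by
      have : Subsingleton (K →ₐ[ℝ] ℝ) := ⟨fun a b => (huniq a).trans (huniq b).symm⟩
      exact Finite.of_subsingleton
    -- basis {1}
    have hli : LinearIndependent ℝ (fun _ : Fin 1 => (1 : K)) := by
      refine LinearIndependent.of_subsingleton 0 ?_
      exact one_ne_zero
    let v : Basis (Fin 1) ℝ K := basisOfLinearIndependentOfCardEqFinrank hli (by simp [h1])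
    have hv1 : v 0 = 1 := by simp [v, coe_basisOfLinearIndependentOfCardEqFinrank]
    refine ⟨1, v, ?_, inferInstance, ?_⟩
    · intro k l hkl; exact absurd (Subsingleton.elim k l) hkl
    · -- counts
      set r : ℝ := θ.symm c with hrdef
      have hc : c = algebraMap ℝ K r := by
        rw [hrdef]
        have := θ.apply_symm_apply c
        exact this.symm
      have htc : t (v 0 * c * v 0) = r * t 1 := by
        rw [hv1, one_mul, mul_one, hc]
        rw [Algebra.algebraMap_eq_smul_one, map_smul, smul_eq_mul]
      have hposiff : (0 < t (v 0 * c * v 0)) ↔ 0 < r := by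
        rw [htc]; exact mul_pos_iff_of_pos_right ht
      have hnegiff : (t (v 0 * c * v 0) < 0) ↔ r < 0 := by
        rw [htc]
        constructor
        · intro hlt; nlinarith
        · intro hlt; nlinarith
      have hcard1 : Nat.card {ψ : K →ₐ[ℝ] ℝ // 0 < ψ c} = if 0 < r then 1 else 0 := by
        split_ifs with hpos
        · rw [Nat.card_eq_one_iff_unique]
          constructor
          · constructor
            intro a b
            exact Subtype.ext ((huniq a.1).trans (huniq b.1).symm)
          · exact ⟨⟨θ.symm, hrdef ▸ hpos⟩⟩
        · rw [Nat.card_eq_zero]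
          left
          constructor
          rintro ⟨ψ, hψ⟩
          rw [huniq ψ] at hψ
          exact hpos hψ
      have hcard2 : Nat.card {ψ : K →ₐ[ℝ] ℝ // ψ c < 0} = if r < 0 then 1 else 0 := by
        split_ifs with hneg
        · rw [Nat.card_eq_one_iff_unique]
          constructor
          · constructor
            intro a b
            exact Subtype.ext ((huniq a.1).trans (huniq b.1).symm)
          · exact ⟨⟨θ.symm, hrdef ▸ hneg⟩⟩
        · rw [Nat.card_eq_zero]
          left
          constructor
          rintro ⟨ψ, hψ⟩
          rw [huniq ψ] at hψ
          exact hneg hψ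
      rw [hcard1, hcard2, Fin.sum_univ_one]
      simp only [hposiff, hnegiff]
      split_ifs <;> simp
  · -- finrank ≥ 2 : complex case
    haveI : Algebra.IsAlgebraic ℝ K := Algebra.IsAlgebraic.of_finite ℝ K
    let ψC : K →ₐ[ℝ] ℂ := IsAlgClosed.lift
    have hinj : Function.Injective ψC := ψC.toRingHom.injective
    have hle2 : finrank ℝ K ≤ 2 := by
      have := LinearMap.finrank_le_finrank_of_injective (f := ψC.toLinearMap) hinj
      rwa [Complex.finrank_real_complex] at this
    have h2 : finrank ℝ K = 2 := le_antisymm hle2 hr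
    have hsurj : Function.Surjective ψC := by
      have hrange : LinearMap.range ψC.toLinearMap = ⊤ := by
        apply Submodule.eq_top_of_finrank_eq
        rw [LinearMap.finrank_range_of_inj hinj, h2, Complex.finrank_real_complex]
      intro x
      have : x ∈ LinearMap.range ψC.toLinearMap := hrange ▸ Submodule.mem_top
      exact this
    let θ : K ≃ₐ[ℝ] ℂ := AlgEquiv.ofBijective ψC ⟨hinj, hsurj⟩
    -- no real points
    haveI hempty : IsEmpty (K →ₐ[ℝ] ℝ) := by
      constructor
      intro ψ
      have hinj' : Function.Injective ψ := ψ.toRingHom.injective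
      have : finrank ℝ K ≤ finrank ℝ ℝ :=
        LinearMap.finrank_le_finrank_of_injective (f := ψ.toLinearMap) hinj'
      rw [finrank_self, h2] at this
      omega
    -- γ : the complex number representing z ↦ t (θ.symm z * c)
    set tC : ℂ → ℝ := fun z => t (θ.symm z * c) with htC
    have htC_lin : ∀ (a b : ℝ) (z w : ℂ), tC ((a : ℂ) * z + (b : ℂ) * w) = a * tC z + b * tC w := by
      intro a b z w
      simp only [htC]
      have : θ.symm ((a : ℂ) * z + (b : ℂ) * w) = a • θ.symm z + b • θ.symm w := by
        rw [← Complex.real_smul, ← Complex.real_smul, map_add, map_smul, map_smul]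
      rw [this, add_mul, smul_mul_assoc, smul_mul_assoc, map_add, map_smul, map_smul]
      simp [smul_eq_mul]
    set γ : ℂ := Complex.ofReal (tC 1) - Complex.ofReal (tC Complex.I) * Complex.I with hγ
    have hγre : γ.re = tC 1 := by simp [hγ]
    have hγim : γ.im = -(tC Complex.I) := by simp [hγ]
    have hkey : ∀ z : ℂ, tC z = (γ * z).re := by
      intro z
      conv_lhs => rw [show z = (z.re : ℂ) * 1 + (z.im : ℂ) * Complex.I from by
        rw [mul_one, Complex.re_add_im]]
      rw [htC_lin, Complex.mul_re, hγre, hγim]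
      ring
    -- square root of conj γ
    obtain ⟨u', hu'⟩ := IsAlgClosed.exists_pow_nat_eq (k := ℂ) (starRingEnd ℂ γ) (n := 2) (by norm_num)
    set u : ℂ := if γ = 0 then 1 else u' with hu
    have hune : u ≠ 0 := by
      rw [hu]
      split_ifs with h0
      · exact one_ne_zero
      · intro h
        rw [h] at hu'
        have : (starRingEnd ℂ) γ = 0 := by rw [← hu']; ring
        exact h0 (by simpa using congrArg (starRingEnd ℂ) this)
    have huu : γ * (u * u) = ((‖γ‖ ^ 2 : ℝ) : ℂ) := by
      rw [hu]
      split_ifs with h0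
      · simp [h0]
      · rw [show u' * u' = u' ^ 2 by ring, hu', Complex.mul_conj, Complex.normSq_eq_norm_sq]
    have habs : (γ * (u * u)).re = ‖γ‖ ^ 2 := by rw [huu, Complex.ofReal_re]
    set zc : Fin 2 → ℂ := ![u, Complex.I * u] with hzc
    have hli : LinearIndependent ℝ ![θ.symm u, θ.symm (Complex.I * u)] := by
      rw [LinearIndependent.pair_iff]
      intro a b hab
      have h0 : (a : ℂ) * u + (b : ℂ) * (Complex.I * u) = 0 := by
        have := congrArg θ hab
        rw [map_add, map_smul, map_smul, AlgEquiv.apply_symm_apply,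
          AlgEquiv.apply_symm_apply, map_zero] at this
        rwa [← Complex.real_smul, ← Complex.real_smul]
      have h0' : ((a : ℂ) + (b : ℂ) * Complex.I) * u = 0 := by rw [← h0]; ring
      have h0'' : (a : ℂ) + (b : ℂ) * Complex.I = 0 := by
        rcases mul_eq_zero.mp h0' with hh | hh
        · exact hh
        · exact absurd hh hune
      constructor
      · have := congrArg Complex.re h0''
        simpa using this
      · have := congrArg Complex.im h0''
        simpa using this
    have hfam : (fun k => θ.symm (zc k)) = ![θ.symm u, θ.symm (Complex.I * u)] := by
      funext k
      fin_cases k <;> simp [hzc]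
    have hli' : LinearIndependent ℝ (fun k => θ.symm (zc k)) := by rw [hfam]; exact hli
    let v : Basis (Fin 2) ℝ K := basisOfLinearIndependentOfCardEqFinrank hli' (by simp [h2])
    have hvk : ∀ k, v k = θ.symm (zc k) :=
      fun k => congrFun (coe_basisOfLinearIndependentOfCardEqFinrank hli' (by simp [h2])) k
    have hval : ∀ z w : ℂ, t (θ.symm z * c * θ.symm w) = (γ * (z * w)).re := by
      intro z w
      have hmr : θ.symm z * c * θ.symm w = θ.symm (z * w) * c := by
        have hzw : θ.symm z * θ.symm w = θ.symm (z * w) := (map_mul θ.symm z w).symm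
        rw [mul_right_comm, hzw]
      rw [hmr]
      exact hkey (z * w)
    have hvv : ∀ k l, t (v k * c * v l) = (γ * (zc k * zc l)).re := by
      intro k l
      rw [hvk, hvk, hval]
    refine ⟨2, v, ?_, Finite.of_fintype _, ?_⟩
    · intro k l hkl
      rw [hvv]
      fin_cases k <;> fin_cases l
      · exact absurd rfl hkl
      · have hzz : zc 0 * zc 1 = Complex.I * (u * u) := by simp [hzc]; ring
        show (γ * (zc 0 * zc 1)).re = 0
        rw [hzz, show γ * (Complex.I * (u * u)) = Complex.I * (γ * (u * u)) from by ring, huu]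
        simp [Complex.mul_re, -Complex.ofReal_pow]
      · have hzz : zc 1 * zc 0 = Complex.I * (u * u) := by simp [hzc]; ring
        show (γ * (zc 1 * zc 0)).re = 0
        rw [hzz, show γ * (Complex.I * (u * u)) = Complex.I * (γ * (u * u)) from by ring, huu]
        simp [Complex.mul_re, -Complex.ofReal_pow]
      · exact absurd rfl hkl
    · have hd0 : t (v 0 * c * v 0) = ‖γ‖ ^ 2 := by
        rw [hvv]
        have hzz : zc 0 * zc 0 = u * u := by simp [hzc]
        rw [hzz, habs]
      have hd1 : t (v 1 * c * v 1) = -(‖γ‖ ^ 2) := by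
        rw [hvv]
        have hzz : zc 1 * zc 1 = -(u * u) := by
          have : zc 1 = Complex.I * u := by simp [hzc]
          rw [this]
          have hI : Complex.I * Complex.I = -1 := Complex.I_mul_I
          calc Complex.I * u * (Complex.I * u) = Complex.I * Complex.I * (u * u) := by ring
            _ = -(u * u) := by rw [hI]; ring
        rw [hzz, show γ * -(u * u) = -(γ * (u * u)) from by ring, Complex.neg_re, habs]
      have hc1 : Nat.card {ψ : K →ₐ[ℝ] ℝ // 0 < ψ c} = 0 := by
        rw [Nat.card_eq_zero]; left
        exact ⟨fun x => hempty.false x.1⟩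
      have hc2 : Nat.card {ψ : K →ₐ[ℝ] ℝ // ψ c < 0} = 0 := by
        rw [Nat.card_eq_zero]; left
        exact ⟨fun x => hempty.false x.1⟩
      rw [hc1, hc2, Fin.sum_univ_two, hd0, hd1]
      rcases eq_or_ne γ 0 with h0 | h0
      · rw [show ‖γ‖ ^ 2 = 0 from by simp [h0]]
        norm_num
      · have hpos : 0 < ‖γ‖ ^ 2 := by
          have := norm_pos_iff.mpr h0
          positivity
        rw [if_pos hpos, if_neg (by linarith), if_neg (by linarith), if_pos (by linarith)]
        simp

universe u

variable (A : Type u) [CommRing A] [Algebra ℝ A] [FiniteDimensional ℝ A]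

noncomputable instance artinianOfFinDim : IsArtinianRing A := IsArtinianRing.of_finite ℝ A

noncomputable def tau : A →ₐ[ℝ] ((I : MaximalSpectrum A) → A ⧸ (I : Ideal A)) :=
  Pi.algHom _ _ fun I => Ideal.Quotient.mkₐ ℝ (I : Ideal A)

lemma phi_tau (a : A) :
    (IsArtinianRing.quotNilradicalEquivPi A) (Ideal.Quotient.mk (nilradical A) a) = tau A a := by
  rfl

lemma tau_surjective : Function.Surjective (tau A) := by
  intro y
  obtain ⟨z, hz⟩ := Ideal.Quotient.mk_surjective ((IsArtinianRing.quotNilradicalEquivPi A).symm y)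
  exact ⟨z, by rw [← phi_tau]; rw [hz, AlgEquiv.apply_symm_apply]⟩

lemma tau_eq_zero_iff (a : A) : tau A a = 0 ↔ a ∈ nilradical A := by
  rw [← phi_tau]
  rw [show (0 : (I : MaximalSpectrum A) → A ⧸ (I : Ideal A))
    = (IsArtinianRing.quotNilradicalEquivPi A) 0 from (map_zero _).symm]
  rw [(IsArtinianRing.quotNilradicalEquivPi A).injective.eq_iff]
  exact Ideal.Quotient.eq_zero_iff_mem

lemma trace_eq_zero_of_nilpotent (a : A) (ha : IsNilpotent a) : Algebra.trace ℝ A a = 0 := by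
  rw [Algebra.trace_apply]
  have h2 : IsNilpotent ((Algebra.lmul ℝ A) a) := ha.map _
  have := LinearMap.isNilpotent_trace_of_isNilpotent h2
  exact isNilpotent_iff_eq_zero.mp this

/-- The trace of an idempotent is its rank, which is positive if nonzero -/
lemma trace_idem_pos (ε : A) (hε : IsIdempotentElem ε) (hne : ε ≠ 0) :
    0 < Algebra.trace ℝ A ε := by
  rw [Algebra.trace_apply]
  have hproj : LinearMap.IsProj (LinearMap.range ((Algebra.lmul ℝ A) ε)) ((Algebra.lmul ℝ A) ε) := by
    constructor
    · intro x; exact LinearMap.mem_range_self _ x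
    · rintro x ⟨y, rfl⟩
      show ε * (ε * y) = ε * y
      rw [← mul_assoc, hε.eq]
  rw [hproj.trace]
  have hmem : ε ∈ LinearMap.range ((Algebra.lmul ℝ A) ε) := ⟨1, mul_one ε⟩
  have hnb : LinearMap.range ((Algebra.lmul ℝ A) ε) ≠ ⊥ := by
    intro hb
    rw [hb] at hmem
    exact hne (Submodule.mem_bot ℝ |>.mp hmem)
  have : Nontrivial ↥(LinearMap.range ((Algebra.lmul ℝ A) ε)) :=
    Submodule.nontrivial_iff_ne_bot.mpr hnb
  have hpos : 0 < finrank ℝ ↥(LinearMap.range ((Algebra.lmul ℝ A) ε)) :=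
    Module.finrank_pos
  exact_mod_cast Nat.cast_pos.mpr hpos

end HermiteAux

namespace Main

variable {A : Type u} [CommRing A] [Algebra ℝ A] [FiniteDimensional ℝ A]

/-- sigma-subtype equivalence -/
def sigmaSubtype {ι : Type*} {H : ι → Type*} (Q : ∀ i, H i → Prop) :
    {x : Σ i, H i // Q x.1 x.2} ≃ Σ i, {ψ : H i // Q i ψ} where
  toFun x := ⟨x.1.1, x.1.2, x.2⟩
  invFun y := ⟨⟨y.1, y.2.1⟩, y.2.2⟩
  left_inv x := rfl
  right_inv y := rfl

set_option maxHeartbeats 2000000 in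
lemma main_count (A : Type u) [CommRing A] [Algebra ℝ A] [FiniteDimensional ℝ A] (h : A) :
    ∃ (σ : Type u) (_ : Fintype σ) (w : Basis σ ℝ A),
      (∀ x y, x ≠ y → Algebra.trace ℝ A (w x * (h * w y)) = 0) ∧
      (((univ.filter fun x => 0 < Algebra.trace ℝ A (w x * (h * w x))).card : ℤ)
          - ((univ.filter fun x => Algebra.trace ℝ A (w x * (h * w x)) < 0).card : ℤ)
        = (Nat.card {φ : A →ₐ[ℝ] ℝ // 0 < φ h} : ℤ)
          - (Nat.card {φ : A →ₐ[ℝ] ℝ // φ h < 0} : ℤ)) := by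
  classical
  haveI : Finite (MaximalSpectrum A) := inferInstance
  haveI : Fintype (MaximalSpectrum A) := Fintype.ofFinite _
  set MI := MaximalSpectrum A with hMI
  let K : MI → Type u := fun I => A ⧸ (I : Ideal A)
  haveI : ∀ I : MI, FiniteDimensional ℝ (K I) := fun I =>
    Module.Finite.of_surjective (Ideal.Quotient.mkₐ ℝ (I : Ideal A)).toLinearMap
      (Ideal.Quotient.mkₐ_surjective ℝ _)
  set τ := HermiteAux.tau A with hτ
  -- the linear section
  obtain ⟨s, hs⟩ := τ.toLinearMap.exists_rightInverse_of_surjective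
    (LinearMap.range_eq_top.mpr (HermiteAux.tau_surjective A))
  have hsp : ∀ p, τ (s p) = p := fun p => congrFun (congrArg (⇑) hs) p
  -- trace only depends on τ
  have htr : ∀ a : A, Algebra.trace ℝ A (s (τ a)) = Algebra.trace ℝ A a := by
    intro a
    have hnil : s (τ a) - a ∈ nilradical A := by
      rw [← HermiteAux.tau_eq_zero_iff A]
      rw [map_sub, hsp, sub_self]
    have := HermiteAux.trace_eq_zero_of_nilpotent A _ hnil
    have hdecomp := map_sub (Algebra.trace ℝ A) (s (τ a)) a
    rw [this] at hdecomp
    linarith [hdecomp]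
  set tt : (∀ I : MI, K I) →ₗ[ℝ] ℝ := (Algebra.trace ℝ A) ∘ₗ s with htt
  set tI : ∀ I : MI, (K I →ₗ[ℝ] ℝ) := fun I => tt ∘ₗ LinearMap.single ℝ K I with htI
  -- positivity of tI 1
  have htIpos : ∀ I : MI, 0 < tI I 1 := by
    intro I
    have hidem : IsIdempotentElem (Pi.single I (1 : K I)) := by
      show Pi.single I 1 * Pi.single I 1 = Pi.single I 1
      funext J
      by_cases hJ : J = I
      · subst hJ; simp
      · simp [Pi.single_eq_of_ne hJ]
    obtain ⟨a, ha⟩ := HermiteAux.tau_surjective A (Pi.single I (1 : K I))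
    obtain ⟨ε, hεidem, hετ⟩ := exists_isIdempotentElem_eq_of_ker_isNilpotent
      (f := (τ : A →+* (∀ I : MI, K I)))
      (fun x hx => by
        rw [RingHom.mem_ker] at hx
        exact (HermiteAux.tau_eq_zero_iff A x).mp hx)
      (Pi.single I 1) ⟨a, ha⟩ hidem
    have hεne : ε ≠ 0 := by
      intro h0
      rw [h0, map_zero] at hετ
      have := congrFun hετ I
      rw [Pi.single_eq_same] at this
      exact one_ne_zero (α := K I) this.symm
    have : tI I 1 = Algebra.trace ℝ A ε := by
      show tt (Pi.single I 1) = _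
      rw [← hετ, htt]
      exact htr ε
    rw [this]
    exact HermiteAux.trace_idem_pos A ε hεidem hεne
  -- factor data
  have hfact : ∀ I : MI, ∃ (n : ℕ) (v : Basis (Fin n) ℝ (K I)),
      (∀ k l, k ≠ l → tI I (v k * (τ h I) * v l) = 0) ∧
      Finite (K I →ₐ[ℝ] ℝ) ∧
      ((∑ k, ((if 0 < tI I (v k * (τ h I) * v k) then (1:ℤ) else 0)
          - (if tI I (v k * (τ h I) * v k) < 0 then (1:ℤ) else 0)))
        = (Nat.card {ψ : K I →ₐ[ℝ] ℝ // 0 < ψ (τ h I)} : ℤ)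
          - (Nat.card {ψ : K I →ₐ[ℝ] ℝ // ψ (τ h I) < 0} : ℤ)) :=
    fun I => HermiteAux.factor_lemma (K I) (tI I) (htIpos I) (τ h I)
  choose n v horth hfin hcount using hfact
  haveI : ∀ I : MI, Finite (K I →ₐ[ℝ] ℝ) := hfin
  -- the nilradical as ℝ-submodule
  set Jmod : Submodule ℝ A := Submodule.restrictScalars ℝ ((nilradical A : Ideal A) : Submodule A A)
    with hJmod
  set m := finrank ℝ Jmod with hm
  set bJ : Basis (Fin m) ℝ Jmod := Module.finBasis ℝ Jmod with hbJ
  set bp : Basis ((I : MI) × Fin (n I)) ℝ (∀ I, K I) := Pi.basis v with hbp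
  set G : ((I : MI) × Fin (n I)) ⊕ Fin m → A :=
    Sum.elim (fun x => s (bp x)) (fun j => ((bJ j : A))) with hG
  -- linear independence of G
  have hli1 : LinearIndependent ℝ (fun x => s (bp x)) := by
    apply LinearIndependent.of_comp τ.toLinearMap
    have : (⇑τ.toLinearMap ∘ fun x => s (bp x)) = ⇑bp := funext fun x => hsp (bp x)
    rw [this]
    exact bp.linearIndependent
  have hli2 : LinearIndependent ℝ (fun j : Fin m => ((bJ j : A))) :=
    bJ.linearIndependent.map' Jmod.subtype (Submodule.ker_subtype _)
  have hdisj : Disjoint (Submodule.span ℝ (Set.range fun x => s (bp x)))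
      (Submodule.span ℝ (Set.range fun j : Fin m => ((bJ j : A)))) := by
    have h1 : Submodule.span ℝ (Set.range fun x => s (bp x)) ≤ LinearMap.range s := by
      rw [Submodule.span_le]
      rintro _ ⟨x, rfl⟩
      exact ⟨bp x, rfl⟩
    have h2 : Submodule.span ℝ (Set.range fun j : Fin m => ((bJ j : A))) ≤ Jmod := by
      rw [Submodule.span_le]
      rintro _ ⟨j, rfl⟩
      exact (bJ j).2
    refine Disjoint.mono h1 h2 ?_
    rw [Submodule.disjoint_def]
    intro x hxr hxJ
    obtain ⟨p, rfl⟩ := hxr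
    have : τ (s p) = 0 := by
      rw [(HermiteAux.tau_eq_zero_iff A _)]
      exact hxJ
    rw [hsp] at this
    rw [this, map_zero]
  have hGli : LinearIndependent ℝ G := LinearIndependent.sum_type hli1 hli2 hdisj
  -- cardinality
  have hkerτ : LinearMap.ker τ.toLinearMap = Jmod := by
    ext x
    rw [LinearMap.mem_ker]
    exact (HermiteAux.tau_eq_zero_iff A x)
  have hcardG : Fintype.card (((I : MI) × Fin (n I)) ⊕ Fin m) = finrank ℝ A := by
    rw [Fintype.card_sum, Fintype.card_sigma]
    have h1 : ∀ I : MI, finrank ℝ (K I) = n I := fun I => by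
      rw [Module.finrank_eq_card_basis (v I), Fintype.card_fin]
    have h2 : finrank ℝ (∀ I, K I) = ∑ I : MI, n I := by
      rw [Module.finrank_pi_fintype ℝ]
      exact Finset.sum_congr rfl fun I _ => h1 I
    have h3 := LinearMap.finrank_range_add_finrank_ker τ.toLinearMap
    have h4 : LinearMap.range τ.toLinearMap = ⊤ :=
      LinearMap.range_eq_top.mpr (HermiteAux.tau_surjective A)
    rw [h4, finrank_top, hkerτ, h2] at h3
    simp only [Fintype.card_fin]
    omega
  -- values of the trace form on G
  have hval_tt : ∀ a : A, Algebra.trace ℝ A a = tt (τ a) := by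
    intro a
    show _ = Algebra.trace ℝ A (s (τ a))
    exact (htr a).symm
  have hsingle_ne : ∀ (I I' : MI) (a : K I) (b : K I'), I ≠ I' →
      (Pi.single I a) * (τ h * Pi.single I' b) = 0 := by
    intro I I' a b hne
    funext J
    show Pi.single I a J * (τ h J * Pi.single I' b J) = 0
    by_cases hJ : J = I
    · subst hJ
      simp only [Pi.single_eq_of_ne hne]
      ring
    · simp only [Pi.single_eq_of_ne hJ]
      ring
  have hsingle_eq : ∀ (I : MI) (a b : K I),
      (Pi.single I a) * (τ h * Pi.single I b) = Pi.single I (a * (τ h I) * b) := by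
    intro I a b
    funext J
    show Pi.single I a J * (τ h J * Pi.single I b J) = Pi.single I (a * (τ h I) * b) J
    by_cases hJ : J = I
    · subst hJ
      simp only [Pi.single_eq_same]
      ring
    · simp only [Pi.single_eq_of_ne hJ]
      ring
  have hGinl : ∀ x y : (I : MI) × Fin (n I),
      Algebra.trace ℝ A (G (Sum.inl x) * (h * G (Sum.inl y)))
        = tt (bp x * (τ h * bp y)) := by
    intro x y
    rw [hval_tt]
    congr 1
    rw [map_mul, map_mul, hG]
    simp only [Sum.elim_inl]
    rw [hsp, hsp]
  have hbpx : ∀ x : (I : MI) × Fin (n I), bp x = Pi.single x.1 (v x.1 x.2) := by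
    intro x
    rw [hbp, Pi.basis_apply]
  have hGnil : ∀ (a : A) (j : Fin m),
      Algebra.trace ℝ A (a * (h * (bJ j : A))) = 0 ∧
      Algebra.trace ℝ A ((bJ j : A) * (h * a)) = 0 := by
    intro a j
    have hjJ : ((bJ j : A)) ∈ nilradical A := (bJ j).2
    constructor
    · apply HermiteAux.trace_eq_zero_of_nilpotent
      rw [← mem_nilradical]
      have : a * (h * (bJ j : A)) = (a * h) * (bJ j : A) := by ring
      rw [this]
      exact Ideal.mul_mem_left _ _ hjJ
    · apply HermiteAux.trace_eq_zero_of_nilpotent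
      rw [← mem_nilradical]
      have : (bJ j : A) * (h * a) = (h * a) * (bJ j : A) := by ring
      rw [this]
      exact Ideal.mul_mem_left _ _ hjJ
  -- orthogonality of G
  have hGorth : ∀ x y, x ≠ y → Algebra.trace ℝ A (G x * (h * G y)) = 0 := by
    rintro (x | jx) (y | jy) hxy
    · rw [hGinl]
      rcases eq_or_ne x.1 y.1 with hI | hI
      · -- same factor, different fin index
        obtain ⟨I, k⟩ := x
        obtain ⟨I', l⟩ := y
        simp only at hI
        subst hI
        have hkl : k ≠ l := by
          intro hkle
          exact hxy (by rw [hkle])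
        rw [hbpx, hbpx]
        simp only
        rw [hsingle_eq, htt]
        show tI I (v I k * (τ h I) * v I l) = 0
        exact horth I k l hkl
      · rw [hbpx, hbpx, hsingle_ne _ _ _ _ hI, map_zero]
    · exact (hGnil (G (Sum.inl x)) jy).1
    · exact (hGnil (G (Sum.inl y)) jx).2
    · exact (hGnil (G (Sum.inr jx)) jy).1
  -- diagonal values
  have hGdiag : ∀ x : (I : MI) × Fin (n I),
      Algebra.trace ℝ A (G (Sum.inl x) * (h * G (Sum.inl x)))
        = tI x.1 (v x.1 x.2 * (τ h x.1) * v x.1 x.2) := by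
    intro x
    rw [hGinl, hbpx, hsingle_eq]
    rfl
  have hGdiag0 : ∀ j : Fin m,
      Algebra.trace ℝ A (G (Sum.inr j) * (h * G (Sum.inr j))) = 0 :=
    fun j => (hGnil _ j).2
  -- single products within one factor
  have hsingle_mul : ∀ (I : MI) (a b : K I),
      Pi.single I a * Pi.single I b = Pi.single I (a * b) := by
    intro I a b
    funext J
    show Pi.single I a J * Pi.single I b J = Pi.single I (a * b) J
    by_cases hJ : J = I
    · subst hJ; simp only [Pi.single_eq_same]
    · simp only [Pi.single_eq_of_ne hJ]; ring
  have hsingle_mul_ne : ∀ (I I' : MI) (a : K I) (b : K I'), I ≠ I' →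
      Pi.single I a * Pi.single I' b = 0 := by
    intro I I' a b hne
    funext J
    show Pi.single I a J * Pi.single I' b J = 0
    by_cases hJ : J = I
    · subst hJ; simp only [Pi.single_eq_of_ne hne]; ring
    · simp only [Pi.single_eq_of_ne hJ]; ring
  -- the hom equivalence
  let F : (Σ I : MI, (K I →ₐ[ℝ] ℝ)) → (A →ₐ[ℝ] ℝ) :=
    fun x => (x.2.comp (Pi.evalAlgHom ℝ K x.1)).comp τ
  have hFh : ∀ x, F x h = x.2 (τ h x.1) := by intro x; rfl
  have hFinj : Function.Injective F := by
    rintro ⟨I, ψ⟩ ⟨I', ψ'⟩ hxy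
    have h1 : ∀ p : ∀ J, K J, ψ (p I) = ψ' (p I') := by
      intro p
      obtain ⟨a, rfl⟩ := HermiteAux.tau_surjective A p
      exact DFunLike.congr_fun hxy a
    have hII : I = I' := by
      by_contra hne
      have := h1 (Pi.single I 1)
      rw [Pi.single_eq_same, Pi.single_eq_of_ne (Ne.symm hne), map_one, map_zero] at this
      exact one_ne_zero this
    subst hII
    have hψ : ψ = ψ' := by
      apply AlgHom.ext
      intro k
      have := h1 (Pi.single I k)
      simp only [Pi.single_eq_same] at this
      exact this
    rw [hψ]
  have hFsurj : Function.Surjective F := by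
    intro φ
    have hker : ∀ a ∈ nilradical A, φ a = 0 := by
      intro a ha
      obtain ⟨nn, hn⟩ := (mem_nilradical.mp ha)
      rcases Nat.eq_zero_or_pos nn with h0 | hpos
      · subst h0
        rw [pow_zero] at hn
        have h1R : (1 : ℝ) = 0 := by rw [← φ.map_one, hn, map_zero]
        exact absurd h1R one_ne_zero
      · have : (φ a) ^ nn = 0 := by rw [← map_pow, hn, map_zero]
        exact pow_eq_zero_iff (Nat.pos_iff_ne_zero.mp hpos) |>.mp this
    let φ' : (A ⧸ nilradical A) →ₐ[ℝ] ℝ := Ideal.Quotient.liftₐ (nilradical A) φ hker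
    -- upgrade the ring equiv to an AlgEquiv
    have hcommutes : ∀ r : ℝ, (IsArtinianRing.quotNilradicalEquivPi A)
        (algebraMap ℝ (A ⧸ nilradical A) r) = algebraMap ℝ (∀ I : MI, K I) r := by
      intro r
      have h1 : algebraMap ℝ (A ⧸ nilradical A) r
          = Ideal.Quotient.mk (nilradical A) (algebraMap ℝ A r) :=
        ((Ideal.Quotient.mkₐ ℝ (nilradical A)).commutes r).symm
      rw [h1, HermiteAux.phi_tau]
      exact (HermiteAux.tau A).commutes r
    let ρ : (A ⧸ nilradical A) ≃ₐ[ℝ] (∀ I : MI, K I) :=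
      AlgEquiv.ofRingEquiv (f := (IsArtinianRing.quotNilradicalEquivPi A).toRingEquiv) hcommutes
    let χ : (∀ I : MI, K I) →ₐ[ℝ] ℝ := φ'.comp ρ.symm.toAlgHom
    have hχτ : ∀ a, χ (τ a) = φ a := by
      intro a
      have h1 : ρ.symm (τ a) = Ideal.Quotient.mk (nilradical A) a := by
        rw [AlgEquiv.symm_apply_eq]
        exact (HermiteAux.phi_tau A a).symm
      show φ' (ρ.symm (τ a)) = φ a
      rw [h1]
      exact Ideal.Quotient.liftₐ_apply (nilradical A) φ hker a ▸ rfl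
    have hsum1 : ∑ I : MI, χ (Pi.single I ((1 : ∀ J, K J) I)) = 1 := by
      rw [← map_sum, Finset.univ_sum_single (1 : ∀ J, K J), map_one]
    have hex : ∃ I : MI, χ (Pi.single I 1) ≠ 0 := by
      by_contra hall
      push_neg at hall
      have : (1 : ℝ) = 0 := by
        rw [← hsum1]
        exact (Finset.sum_eq_zero fun I _ => hall I).symm ▸ rfl
      exact one_ne_zero this
    obtain ⟨I₀, hI₀⟩ := hex
    have hone : χ (Pi.single I₀ 1) = 1 := by
      have hidem : χ (Pi.single I₀ 1) * χ (Pi.single I₀ 1) = χ (Pi.single I₀ 1) := by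
        rw [← map_mul, hsingle_mul, one_mul]
      have := mul_right_cancel₀ hI₀ (by rw [hidem, one_mul] : χ (Pi.single I₀ 1) * χ (Pi.single I₀ 1) = 1 * χ (Pi.single I₀ 1))
      exact this
    let ψ : K I₀ →ₐ[ℝ] ℝ :=
      { toFun := fun k => χ (Pi.single I₀ k)
        map_one' := hone
        map_mul' := by
          intro a b
          show χ (Pi.single I₀ (a * b)) = χ (Pi.single I₀ a) * χ (Pi.single I₀ b)
          rw [← hsingle_mul I₀ a b, map_mul]
        map_zero' := by
          show χ (Pi.single I₀ (0 : K I₀)) = 0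
          rw [Pi.single_zero, map_zero]
        map_add' := by
          intro a b
          show χ (Pi.single I₀ (a + b)) = χ (Pi.single I₀ a) + χ (Pi.single I₀ b)
          rw [← map_add, ← Pi.single_add]
        commutes' := by
          intro r
          show χ (Pi.single I₀ (algebraMap ℝ (K I₀) r)) = algebraMap ℝ ℝ r
          rw [Algebra.algebraMap_eq_smul_one, Pi.single_smul, map_smul, hone, smul_eq_mul,
            mul_one]
          simp }
    refine ⟨⟨I₀, ψ⟩, ?_⟩
    apply AlgHom.ext
    intro a
    show ψ (τ a I₀) = φ a
    rw [← hχτ a]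
    show χ (Pi.single I₀ (τ a I₀)) = χ (τ a)
    have hdecomp : (τ a : ∀ J, K J) = ∑ J : MI, Pi.single J (τ a J) :=
      (Finset.univ_sum_single (τ a)).symm
    conv_rhs => rw [hdecomp]
    rw [map_sum, Finset.sum_eq_single I₀]
    · intro J _ hJ
      have : χ (Pi.single J (τ a J)) = χ (Pi.single J (τ a J)) * χ (Pi.single I₀ 1) := by
        rw [hone, mul_one]
      rw [this, ← map_mul, hsingle_mul_ne J I₀ _ _ hJ, map_zero]
    · intro habs
      exact absurd (Finset.mem_univ I₀) habs
  have hFbij : Function.Bijective F := ⟨hFinj, hFsurj⟩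
  let E : (Σ I : MI, (K I →ₐ[ℝ] ℝ)) ≃ (A →ₐ[ℝ] ℝ) := Equiv.ofBijective F hFbij
  haveI : ∀ I : MI, Fintype {ψ : K I →ₐ[ℝ] ℝ // 0 < ψ (τ h I)} := fun I => Fintype.ofFinite _
  haveI : ∀ I : MI, Fintype {ψ : K I →ₐ[ℝ] ℝ // ψ (τ h I) < 0} := fun I => Fintype.ofFinite _
  have hEh : ∀ x : Σ I : MI, (K I →ₐ[ℝ] ℝ), E x h = x.2 (τ h x.1) := fun x => hFh x
  have hcard1 : (Nat.card {φ : A →ₐ[ℝ] ℝ // 0 < φ h} : ℤ)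
      = ∑ I : MI, (Nat.card {ψ : K I →ₐ[ℝ] ℝ // 0 < ψ (τ h I)} : ℤ) := by
    have e0 : {x : Σ I : MI, (K I →ₐ[ℝ] ℝ) // 0 < (E x) h} ≃ {φ : A →ₐ[ℝ] ℝ // 0 < φ h} :=
      Equiv.subtypeEquiv E (fun x => Iff.rfl)
    have e0' : {x : Σ I : MI, (K I →ₐ[ℝ] ℝ) // 0 < x.2 (τ h x.1)}
        ≃ {x : Σ I : MI, (K I →ₐ[ℝ] ℝ) // 0 < (E x) h} :=
      Equiv.subtypeEquivRight (fun x => by rw [hEh x])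
    have e1 := ((e0'.trans e0).symm).trans (sigmaSubtype (fun (I : MI) (ψ : K I →ₐ[ℝ] ℝ) => 0 < ψ (τ h I)))
    have h2 : Nat.card (Σ I : MI, {ψ : K I →ₐ[ℝ] ℝ // 0 < ψ (τ h I)})
        = ∑ I : MI, Nat.card {ψ : K I →ₐ[ℝ] ℝ // 0 < ψ (τ h I)} := by
      rw [Nat.card_eq_fintype_card, Fintype.card_sigma]
      exact Finset.sum_congr rfl fun I _ => (Nat.card_eq_fintype_card).symm
    rw [Nat.card_congr e1, h2]
    push_cast
    rfl
  have hcard2 : (Nat.card {φ : A →ₐ[ℝ] ℝ // φ h < 0} : ℤ)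
      = ∑ I : MI, (Nat.card {ψ : K I →ₐ[ℝ] ℝ // ψ (τ h I) < 0} : ℤ) := by
    have e0 : {x : Σ I : MI, (K I →ₐ[ℝ] ℝ) // (E x) h < 0} ≃ {φ : A →ₐ[ℝ] ℝ // φ h < 0} :=
      Equiv.subtypeEquiv E (fun x => Iff.rfl)
    have e0' : {x : Σ I : MI, (K I →ₐ[ℝ] ℝ) // x.2 (τ h x.1) < 0}
        ≃ {x : Σ I : MI, (K I →ₐ[ℝ] ℝ) // (E x) h < 0} :=
      Equiv.subtypeEquivRight (fun x => by rw [hEh x])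
    have e1 := ((e0'.trans e0).symm).trans (sigmaSubtype (fun (I : MI) (ψ : K I →ₐ[ℝ] ℝ) => ψ (τ h I) < 0))
    have h2 : Nat.card (Σ I : MI, {ψ : K I →ₐ[ℝ] ℝ // ψ (τ h I) < 0})
        = ∑ I : MI, Nat.card {ψ : K I →ₐ[ℝ] ℝ // ψ (τ h I) < 0} := by
      rw [Nat.card_eq_fintype_card, Fintype.card_sigma]
      exact Finset.sum_congr rfl fun I _ => (Nat.card_eq_fintype_card).symm
    rw [Nat.card_congr e1, h2]
    push_cast
    rfl
  -- the global count over the index type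
  have hglobal : ∀ (w : Basis (((I : MI) × Fin (n I)) ⊕ Fin m) ℝ A), (⇑w = G) →
      (((univ.filter fun x => 0 < Algebra.trace ℝ A (w x * (h * w x))).card : ℤ)
          - ((univ.filter fun x => Algebra.trace ℝ A (w x * (h * w x)) < 0).card : ℤ)
        = (Nat.card {φ : A →ₐ[ℝ] ℝ // 0 < φ h} : ℤ)
          - (Nat.card {φ : A →ₐ[ℝ] ℝ // φ h < 0} : ℤ)) := by
    intro w hw
    simp only [hw]
    rw [Finset.card_filter, Finset.card_filter]
    push_cast
    rw [← Finset.sum_sub_distrib, Fintype.sum_sum_type]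
    have hr0 : ∀ j : Fin m,
        ((if 0 < Algebra.trace ℝ A (G (Sum.inr j) * (h * G (Sum.inr j))) then (1:ℤ) else 0)
          - (if Algebra.trace ℝ A (G (Sum.inr j) * (h * G (Sum.inr j))) < 0 then (1:ℤ) else 0))
          = 0 := by
      intro j
      rw [hGdiag0 j]
      simp
    rw [Finset.sum_congr rfl (fun j _ => hr0 j), Finset.sum_const_zero, add_zero]
    have hterm : ∀ x : (I : MI) × Fin (n I),
        ((if 0 < Algebra.trace ℝ A (G (Sum.inl x) * (h * G (Sum.inl x))) then (1:ℤ) else 0)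
          - (if Algebra.trace ℝ A (G (Sum.inl x) * (h * G (Sum.inl x))) < 0 then (1:ℤ) else 0))
        = ((if 0 < tI x.1 (v x.1 x.2 * (τ h x.1) * v x.1 x.2) then (1:ℤ) else 0)
          - (if tI x.1 (v x.1 x.2 * (τ h x.1) * v x.1 x.2) < 0 then (1:ℤ) else 0)) := by
      intro x
      rw [hGdiag x]
    rw [Finset.sum_congr rfl (fun x _ => hterm x)]
    rw [← Finset.univ_sigma_univ, Finset.sum_sigma]
    have : ∀ I : MI, (∑ k : Fin (n I),
        ((if 0 < tI I (v I k * (τ h I) * v I k) then (1:ℤ) else 0)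
          - (if tI I (v I k * (τ h I) * v I k) < 0 then (1:ℤ) else 0)))
        = (Nat.card {ψ : K I →ₐ[ℝ] ℝ // 0 < ψ (τ h I)} : ℤ)
          - (Nat.card {ψ : K I →ₐ[ℝ] ℝ // ψ (τ h I) < 0} : ℤ) := hcount
    rw [Finset.sum_congr rfl (fun I _ => this I), Finset.sum_sub_distrib]
    rw [hcard1, hcard2]
  -- construct the basis (or handle the degenerate case)
  rcases isEmpty_or_nonempty ((((I : MI) × Fin (n I)) ⊕ Fin m)) with hE | hNE
  · haveI : IsEmpty ((((I : MI) × Fin (n I)) ⊕ Fin m)) := hE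
    haveI : Subsingleton A := by
      have h0 : finrank ℝ A = 0 := by rw [← hcardG]; exact Fintype.card_eq_zero
      exact finrank_zero_iff.mp h0
    haveI hAempty : IsEmpty (A →ₐ[ℝ] ℝ) := by
      constructor
      intro φ
      have h10 : (1:A) = 0 := Subsingleton.elim _ _
      have : (1:ℝ) = 0 := by rw [← φ.map_one, h10, map_zero]
      exact one_ne_zero this
    refine ⟨(((I : MI) × Fin (n I)) ⊕ Fin m), inferInstance, Basis.empty A, ?_, ?_⟩
    · intro x _ _; exact (hE.false x).elim
    · haveI : IsEmpty {φ : A →ₐ[ℝ] ℝ // 0 < φ h} := ⟨fun x => hAempty.false x.1⟩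
      haveI : IsEmpty {φ : A →ₐ[ℝ] ℝ // φ h < 0} := ⟨fun x => hAempty.false x.1⟩
      rw [Nat.card_of_isEmpty, Nat.card_of_isEmpty]
      rw [Finset.univ_eq_empty, Finset.filter_empty, Finset.filter_empty]
      simp
  · set w : Basis ((((I : MI) × Fin (n I)) ⊕ Fin m)) ℝ A :=
      basisOfLinearIndependentOfCardEqFinrank hGli hcardG with hwdef
    have hwG : ⇑w = G := coe_basisOfLinearIndependentOfCardEqFinrank hGli hcardG
    refine ⟨_, inferInstance, w, ?_, hglobal w hwG⟩
    intro x y hxy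
    rw [show w x = G x from by rw [hwG], show w y = G y from by rw [hwG]]
    exact hGorth x y hxy
end Main

section Final

variable {A : Type*} [CommRing A] [Algebra ℝ A] [FiniteDimensional ℝ A]

lemma eigencount_congr {ι : Type*} [Fintype ι] [DecidableEq ι]
    {M N : Matrix ι ι ℝ} (hEq : M = N) (hM : M.IsHermitian) (hN : N.IsHermitian) (i : ι) :
    hM.eigenvalues i = hN.eigenvalues i := by
  subst hEq
  rfl

lemma signature_count (A : Type*) [CommRing A] [Algebra ℝ A] [FiniteDimensional ℝ A] (h : A)
    (ι : Type*) [Fintype ι] [DecidableEq ι] (b : Basis ι ℝ A)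
    (hM : (BilinForm.toMatrix b
        ((Algebra.traceForm ℝ A).compl₂ (LinearMap.mulLeft ℝ h))).IsHermitian) :
    ((Finset.univ.filter fun i => 0 < hM.eigenvalues i).card : ℤ) -
        ((Finset.univ.filter fun i => hM.eigenvalues i < 0).card : ℤ) =
      (Nat.card {φ : A →ₐ[ℝ] ℝ // 0 < φ h} : ℤ) -
        (Nat.card {φ : A →ₐ[ℝ] ℝ // φ h < 0} : ℤ) := by
  classical
  set B : A →ₗ[ℝ] A →ₗ[ℝ] ℝ := (Algebra.traceForm ℝ A).compl₂ (LinearMap.mulLeft ℝ h) with hB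
  have hBapply : ∀ x y : A, B x y = Algebra.trace ℝ A (x * (h * y)) := by
    intro x y
    rw [hB, LinearMap.compl₂_apply, Algebra.traceForm_apply, LinearMap.mulLeft_apply]
  -- the structural orthogonal basis
  obtain ⟨σ, finσ, w, hworth, hwcount⟩ := Main.main_count A h
  letI := finσ
  have hworthB : ∀ x y, x ≠ y → B (w x) (w y) = 0 := by
    intro x y hxy
    rw [hBapply]
    exact hworth x y hxy
  -- the eigenvector orthogonal basis
  set e := hM.eigenvectorBasis with he
  let VB : Basis ι ℝ A := (e.toBasis).map
    ((WithLp.linearEquiv 2 ℝ (ι → ℝ)).trans b.equivFun.symm)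
  have hVBapp : ∀ i, VB i = ∑ k, e i k • b k := by
    intro i
    show (e.toBasis).map _ i = _
    rw [Basis.map_apply, OrthonormalBasis.coe_toBasis, LinearEquiv.trans_apply,
      Basis.equivFun_symm_apply]
    rfl
  have hM_entry : ∀ k l, B (b k) (b l)
      = (BilinForm.toMatrix b B) k l := fun k l => (BilinForm.toMatrix_apply b B k l).symm
  have hBVB : ∀ i j, B (VB i) (VB j) = hM.eigenvalues j * ∑ k, e i k * e j k := by
    intro i j
    rw [hVBapp, hVBapp, HermiteAux.bilin_apply_sum]
    have h1 : ∀ k : ι, (∑ l, e i k * e j l * B (b k) (b l))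
        = e i k * (hM.eigenvalues j * e j k) := by
      intro k
      have hmv := congrFun (hM.mulVec_eigenvectorBasis j) k
      have hmv' : (∑ l, (BilinForm.toMatrix b B) k l * e j l) = hM.eigenvalues j * e j k := by
        simpa [Matrix.mulVec, dotProduct] using hmv
      calc (∑ l, e i k * e j l * B (b k) (b l))
          = e i k * ∑ l, (BilinForm.toMatrix b B) k l * e j l := by
            rw [Finset.mul_sum]
            refine Finset.sum_congr rfl fun l _ => ?_
            rw [hM_entry]
            ring
        _ = e i k * (hM.eigenvalues j * e j k) := by rw [hmv']
    rw [Finset.sum_congr rfl fun k _ => h1 k, Finset.mul_sum]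
    refine Finset.sum_congr rfl fun k _ => ?_
    ring
  have hinner : ∀ i j, (∑ k, e i k * e j k) = if i = j then 1 else 0 := by
    intro i j
    have horthonormal := e.orthonormal
    have hip := orthonormal_iff_ite.mp horthonormal i j
    rw [PiLp.inner_apply] at hip
    simpa [mul_comm] using hip
  have hVBdiag : ∀ i, B (VB i) (VB i) = hM.eigenvalues i := by
    intro i
    rw [hBVB, hinner, if_pos rfl, mul_one]
  have hVBorth : ∀ i j, i ≠ j → B (VB i) (VB j) = 0 := by
    intro i j hij
    rw [hBVB, hinner, if_neg hij, mul_zero]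
  -- compare counts
  have hpos := HermiteAux.card_pos_eq_of_orthobases B VB w hVBorth hworthB
  have hneg := HermiteAux.card_neg_eq_of_orthobases B VB w hVBorth hworthB
  have hfilter1 : (Finset.univ.filter fun i => 0 < hM.eigenvalues i)
      = (Finset.univ.filter fun i => 0 < B (VB i) (VB i)) :=
    Finset.filter_congr fun i _ => by rw [hVBdiag]
  have hfilter2 : (Finset.univ.filter fun i => hM.eigenvalues i < 0)
      = (Finset.univ.filter fun i => B (VB i) (VB i) < 0) :=
    Finset.filter_congr fun i _ => by rw [hVBdiag]
  have hfilter3 : (Finset.univ.filter fun x => 0 < B (w x) (w x))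
      = (Finset.univ.filter fun x => 0 < Algebra.trace ℝ A (w x * (h * w x))) :=
    Finset.filter_congr fun x _ => by rw [hBapply]
  have hfilter4 : (Finset.univ.filter fun x => B (w x) (w x) < 0)
      = (Finset.univ.filter fun x => Algebra.trace ℝ A (w x * (h * w x)) < 0) :=
    Finset.filter_congr fun x _ => by rw [hBapply]
  rw [hfilter1, hfilter2, hpos, hneg, hfilter3, hfilter4]
  exact hwcount

end Final


/-- **Multivariate Hermite quadratic form, signature part (over ℝ).**
Let `A` be a finite-dimensional commutative `ℝ`-algebra, `h ∈ A`, and `b` a basis of `A`.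
The Gram matrix `M` of the Hermite form `H_h (f,g) = tr (L_{f h g})` with respect to `b`
is symmetric (Hermitian over `ℝ`), and its signature—the number of positive eigenvalues
minus the number of negative eigenvalues, counted with multiplicity—equals
`#{φ : A →ₐ[ℝ] ℝ | φ h > 0} − #{φ : A →ₐ[ℝ] ℝ | φ h < 0}`.
In particular, for `h = 1` the signature of the trace form equals the number of
`ℝ`-algebra homomorphisms `A → ℝ`. -/
theorem hermite_signature_eq_real_point_count
    (A : Type*) [CommRing A] [Algebra ℝ A] [FiniteDimensional ℝ A] (h : A)
    (ι : Type*) [Fintype ι] [DecidableEq ι] (b : Basis ι ℝ A) :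
    (BilinForm.toMatrix b
        ((Algebra.traceForm ℝ A).compl₂ (LinearMap.mulLeft ℝ h))).IsHermitian ∧
    (∀ hM : (BilinForm.toMatrix b
        ((Algebra.traceForm ℝ A).compl₂ (LinearMap.mulLeft ℝ h))).IsHermitian,
      ((Finset.univ.filter fun i => 0 < hM.eigenvalues i).card : ℤ) -
          ((Finset.univ.filter fun i => hM.eigenvalues i < 0).card : ℤ) =
        (Nat.card {φ : A →ₐ[ℝ] ℝ // 0 < φ h} : ℤ) -
          (Nat.card {φ : A →ₐ[ℝ] ℝ // φ h < 0} : ℤ)) ∧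
    (∀ hM₁ : (BilinForm.toMatrix b (Algebra.traceForm ℝ A)).IsHermitian,
      ((Finset.univ.filter fun i => 0 < hM₁.eigenvalues i).card : ℤ) -
          ((Finset.univ.filter fun i => hM₁.eigenvalues i < 0).card : ℤ) =
        (Nat.card (A →ₐ[ℝ] ℝ) : ℤ)) := by
  classical
  have hBapply : ∀ x y : A,
      ((Algebra.traceForm ℝ A).compl₂ (LinearMap.mulLeft ℝ h)) x y
        = Algebra.trace ℝ A (x * (h * y)) := by
    intro x y
    rw [LinearMap.compl₂_apply, Algebra.traceForm_apply, LinearMap.mulLeft_apply]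
  have hherm : (BilinForm.toMatrix b
      ((Algebra.traceForm ℝ A).compl₂ (LinearMap.mulLeft ℝ h))).IsHermitian := by
    show Matrix.conjTranspose (LinearMap.BilinForm.toMatrix b
      ((Algebra.traceForm ℝ A).compl₂ (LinearMap.mulLeft ℝ h))) = LinearMap.BilinForm.toMatrix b
      ((Algebra.traceForm ℝ A).compl₂ (LinearMap.mulLeft ℝ h))
    ext i j
    rw [Matrix.conjTranspose_apply, LinearMap.BilinForm.toMatrix_apply, LinearMap.BilinForm.toMatrix_apply]
    rw [hBapply, hBapply]
    rw [star_trivial]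
    congr 1
    ring
  refine ⟨hherm, fun hM => signature_count A h ι b hM, ?_⟩
  intro hM₁
  have hEq : BilinForm.toMatrix b ((Algebra.traceForm ℝ A).compl₂ (LinearMap.mulLeft ℝ (1 : A)))
      = BilinForm.toMatrix b (Algebra.traceForm ℝ A) := by
    rw [LinearMap.mulLeft_one, LinearMap.compl₂_id]
  have hM' : (BilinForm.toMatrix b
      ((Algebra.traceForm ℝ A).compl₂ (LinearMap.mulLeft ℝ (1 : A)))).IsHermitian := by
    rw [hEq]; exact hM₁
  have hmain := signature_count A (1 : A) ι b hM'
  have heig : ∀ i, hM'.eigenvalues i = hM₁.eigenvalues i := eigencount_congr hEq hM' hM₁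
  have hfilt1 : (Finset.univ.filter fun i => 0 < hM'.eigenvalues i)
      = (Finset.univ.filter fun i => 0 < hM₁.eigenvalues i) :=
    Finset.filter_congr fun i _ => by rw [heig]
  have hfilt2 : (Finset.univ.filter fun i => hM'.eigenvalues i < 0)
      = (Finset.univ.filter fun i => hM₁.eigenvalues i < 0) :=
    Finset.filter_congr fun i _ => by rw [heig]
  rw [hfilt1, hfilt2] at hmain
  rw [hmain]
  have hcard1 : Nat.card {φ : A →ₐ[ℝ] ℝ // 0 < φ (1 : A)} = Nat.card (A →ₐ[ℝ] ℝ) :=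
    Nat.card_congr (Equiv.subtypeUnivEquiv fun φ => by rw [map_one]; exact one_pos)
  have hcard2 : Nat.card {φ : A →ₐ[ℝ] ℝ // φ (1 : A) < 0} = 0 := by
    rw [Nat.card_eq_zero]
    left
    constructor
    rintro ⟨φ, hφ⟩
    rw [map_one] at hφ
    linarith
  rw [hcard1, hcard2]
  ring
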